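/- Let S = k[x_1, x_2] with char(k) ≠ 2 and I = (x_1, x_2). The defining ideal of the Rees-like algebra RL(I) in T = S[y_1,y_2,z] (with y_i ↦ x_i t, z ↦ t^2) is (x_1 y_2 - x_2 y_1, y_1^2 - z x_1^2, y_1 y_2 - z x_1 x_2, y_2^2 - z x_2^2); that is, the kernel of the map T → S[t] given by y_i ↦ x_i t, z ↦ t^2 is generated by these four elements. -/

import Mathlib

namespace ReesLikeAux

open MvPolynomial

noncomputable section

variable {R : Type*} [CommRing R]

/-- The generators of the Rees-like ideal. -/
def gens (f1 f2 : R) : Set (MvPolynomial (Fin 3) R) :=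
  {C f1 * X 1 - C f2 * X 0,
   X 0 ^ 2 - X 2 * C f1 ^ 2,
   X 0 * X 1 - X 2 * C (f1 * f2),
   X 1 ^ 2 - X 2 * C f2 ^ 2}

def Jid (f1 f2 : R) : Ideal (MvPolynomial (Fin 3) R) := Ideal.span (gens f1 f2)

/-- Normal form building block. -/
def nfM (m : MvPolynomial (Fin 3) R) (a : ℕ →₀ R) : MvPolynomial (Fin 3) R :=
  a.sum fun n s => C s * X 2 ^ n * m

def shiftF (a : ℕ →₀ R) : ℕ →₀ R := Finsupp.mapDomain (· + 1) a

def scaleF (r : R) (a : ℕ →₀ R) : ℕ →₀ R := a.mapRange (· * r) (zero_mul r)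

lemma nfM_zero (m : MvPolynomial (Fin 3) R) : nfM m (0 : ℕ →₀ R) = 0 :=
  Finsupp.sum_zero_index

lemma nfM_add (m : MvPolynomial (Fin 3) R) (a a' : ℕ →₀ R) :
    nfM m (a + a') = nfM m a + nfM m a' :=
  Finsupp.sum_add_index' (fun n => by simp) (fun n b₁ b₂ => by rw [map_add]; ring)

lemma nfM_single (m : MvPolynomial (Fin 3) R) (s : R) :
    nfM m (Finsupp.single 0 s) = C s * m := by
  rw [nfM, Finsupp.sum_single_index (by simp)]
  simp

lemma nfM_mul (m w : MvPolynomial (Fin 3) R) (a : ℕ →₀ R) :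
    nfM m a * w = nfM (m * w) a := by
  rw [nfM, nfM, Finsupp.sum, Finsupp.sum, Finset.sum_mul]
  exact Finset.sum_congr rfl fun n _ => by ring

lemma nfM_shift (m : MvPolynomial (Fin 3) R) (a : ℕ →₀ R) :
    nfM m (shiftF a) = nfM (m * X 2) a := by
  rw [nfM, shiftF, Finsupp.sum_mapDomain_index (fun n => by simp)
    (fun n b₁ b₂ => by rw [map_add]; ring)]
  exact Finsupp.sum_congr fun n _ => by rw [pow_succ]; ring

lemma nfM_scale (m : MvPolynomial (Fin 3) R) (r : R) (a : ℕ →₀ R) :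
    nfM m (scaleF r a) = C r * nfM m a := by
  rw [nfM, scaleF, Finsupp.sum_mapRange_index (fun n => by simp), nfM, Finsupp.mul_sum]
  exact Finsupp.sum_congr fun n _ => by rw [map_mul]; ring

lemma reduce_mem {f1 f2 : R} (m w : MvPolynomial (Fin 3) R) (r : R)
    (h : m * w - X 2 * C r ∈ Jid f1 f2) (b : ℕ →₀ R) :
    nfM m b * w - nfM 1 (shiftF (scaleF r b)) ∈ Jid f1 f2 := by
  rw [nfM_mul, nfM_shift, nfM_scale, one_mul]
  have key : nfM (m * w) b - C r * nfM (X 2) b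
      = b.sum fun n s => (C s * X 2 ^ n) * (m * w - X 2 * C r) := by
    rw [nfM, nfM, Finsupp.mul_sum, ← Finsupp.sum_sub]
    exact Finsupp.sum_congr fun n _ => by ring
  rw [key, Finsupp.sum]
  exact Submodule.sum_mem _ fun n _ => Ideal.mul_mem_left _ _ h

variable (f1 f2 : R)

lemma g1_mem : C f1 * X 1 - C f2 * X 0 ∈ Jid f1 f2 :=
  Ideal.subset_span (by simp [gens])

lemma g2_mem : X 0 * X 0 - X 2 * C (f1 * f1) ∈ Jid f1 f2 := by
  have : (X 0 * X 0 - X 2 * C (f1 * f1) : MvPolynomial (Fin 3) R)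
      = X 0 ^ 2 - X 2 * C f1 ^ 2 := by rw [map_mul]; ring
  rw [this]
  exact Ideal.subset_span (by simp [gens])

lemma g3_mem : X 0 * X 1 - X 2 * C (f1 * f2) ∈ Jid f1 f2 :=
  Ideal.subset_span (by simp [gens])

lemma g3'_mem : X 1 * X 0 - X 2 * C (f1 * f2) ∈ Jid f1 f2 := by
  rw [mul_comm]; exact g3_mem f1 f2

lemma g4_mem : X 1 * X 1 - X 2 * C (f2 * f2) ∈ Jid f1 f2 := by
  have : (X 1 * X 1 - X 2 * C (f2 * f2) : MvPolynomial (Fin 3) R)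
      = X 1 ^ 2 - X 2 * C f2 ^ 2 := by rw [map_mul]; ring
  rw [this]
  exact Ideal.subset_span (by simp [gens])

lemma claimA (p : MvPolynomial (Fin 3) R) :
    ∃ a b c : ℕ →₀ R,
      p - (nfM 1 a + nfM (X 0) b + nfM (X 1) c) ∈ Jid f1 f2 := by
  induction p using MvPolynomial.induction_on with
  | C s =>
      exact ⟨Finsupp.single 0 s, 0, 0, by
        simpa [nfM_single, nfM_zero] using (Jid f1 f2).zero_mem⟩
  | add p q hp hq =>
      obtain ⟨a, b, c, h1⟩ := hp
      obtain ⟨a', b', c', h2⟩ := hq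
      refine ⟨a + a', b + b', c + c', ?_⟩
      have := add_mem h1 h2
      convert this using 1
      simp only [nfM_add]
      ring
  | mul_X p i hp =>
      obtain ⟨a, b, c, h⟩ := hp
      have hmul : p * X i - (nfM 1 a + nfM (X 0) b + nfM (X 1) c) * X i ∈ Jid f1 f2 := by
        have := Ideal.mul_mem_right (X i) _ h
        rwa [sub_mul] at this
      fin_cases i <;>
        [skip; skip; skip] <;>
        simp only [Fin.isValue] at hmul ⊢
      · -- i = 0
        rw [show ((⟨0, by omega⟩ : Fin 3)) = (0 : Fin 3) from rfl] at hmul ⊢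
        refine ⟨shiftF (scaleF (f1 * f1) b) + shiftF (scaleF (f1 * f2) c), a, 0, ?_⟩
        have h1 := reduce_mem (X 0) (X 0) (f1 * f1) (g2_mem f1 f2) b
        have h2 := reduce_mem (X 1) (X 0) (f1 * f2) (g3'_mem f1 f2) c
        have := add_mem hmul (add_mem h1 h2)
        convert this using 1
        simp only [nfM_add, nfM_mul, nfM_zero, nfM_shift, add_mul, one_mul]
        try ring
      · -- i = 1
        rw [show ((⟨1, by omega⟩ : Fin 3)) = (1 : Fin 3) from rfl] at hmul ⊢
        refine ⟨shiftF (scaleF (f1 * f2) b) + shiftF (scaleF (f2 * f2) c), 0, a, ?_⟩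
        have h1 := reduce_mem (X 0) (X 1) (f1 * f2) (g3_mem f1 f2) b
        have h2 := reduce_mem (X 1) (X 1) (f2 * f2) (g4_mem f1 f2) c
        have := add_mem hmul (add_mem h1 h2)
        convert this using 1
        simp only [nfM_add, nfM_mul, nfM_zero, nfM_shift, add_mul, one_mul]
        try ring
      · -- i = 2
        rw [show ((⟨2, by omega⟩ : Fin 3)) = (2 : Fin 3) from rfl] at hmul ⊢
        refine ⟨shiftF a, shiftF b, shiftF c, ?_⟩
        convert hmul using 1
        simp only [nfM_add, nfM_mul, nfM_zero, nfM_shift, add_mul, one_mul]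
        try ring

-- coefficient extraction lemmas
lemma coeff_even (u : Finset ℕ) (g : ℕ → R) (m : ℕ) :
    (∑ n ∈ u, Polynomial.C (g n) * Polynomial.X ^ (2 * n)).coeff (2 * m)
      = if m ∈ u then g m else 0 := by
  rw [Polynomial.finset_sum_coeff]
  rw [Finset.sum_congr rfl (fun n _ => ?_), Finset.sum_ite_eq' u m g]
  rcases eq_or_ne n m with rfl | hn
  · simp [Polynomial.coeff_C_mul, Polynomial.coeff_X_pow]
  · simp only [Polynomial.coeff_C_mul, Polynomial.coeff_X_pow,
      if_neg (by omega : ¬ 2 * m = 2 * n), mul_zero, if_neg hn]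

lemma coeff_odd (u : Finset ℕ) (g : ℕ → R) (m : ℕ) :
    (∑ n ∈ u, Polynomial.C (g n) * Polynomial.X ^ (2 * n + 1)).coeff (2 * m + 1)
      = if m ∈ u then g m else 0 := by
  rw [Polynomial.finset_sum_coeff]
  rw [Finset.sum_congr rfl (fun n _ => ?_), Finset.sum_ite_eq' u m g]
  rcases eq_or_ne n m with rfl | hn
  · simp [Polynomial.coeff_C_mul, Polynomial.coeff_X_pow]
  · simp only [Polynomial.coeff_C_mul, Polynomial.coeff_X_pow,
      if_neg (by omega : ¬ 2 * m + 1 = 2 * n + 1), mul_zero, if_neg hn]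

lemma coeff_odd_at_even (u : Finset ℕ) (g : ℕ → R) (m : ℕ) :
    (∑ n ∈ u, Polynomial.C (g n) * Polynomial.X ^ (2 * n + 1)).coeff (2 * m) = 0 := by
  rw [Polynomial.finset_sum_coeff]
  exact Finset.sum_eq_zero fun n _ => by
    simp only [Polynomial.coeff_C_mul, Polynomial.coeff_X_pow,
      if_neg (by omega : ¬ 2 * m = 2 * n + 1), mul_zero]

lemma coeff_even_at_odd (u : Finset ℕ) (g : ℕ → R) (m : ℕ) :
    (∑ n ∈ u, Polynomial.C (g n) * Polynomial.X ^ (2 * n)).coeff (2 * m + 1) = 0 := by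
  rw [Polynomial.finset_sum_coeff]
  exact Finset.sum_eq_zero fun n _ => by
    simp only [Polynomial.coeff_C_mul, Polynomial.coeff_X_pow,
      if_neg (by omega : ¬ 2 * m + 1 = 2 * n), mul_zero]

/-- The evaluation map. -/
def phi (f1 f2 : R) : MvPolynomial (Fin 3) R →ₐ[R] Polynomial R :=
  aeval ![Polynomial.C f1 * Polynomial.X, Polynomial.C f2 * Polynomial.X, Polynomial.X ^ 2]

lemma phi_nfM_one (a : ℕ →₀ R) :
    phi f1 f2 (nfM 1 a) = ∑ n ∈ a.support, Polynomial.C (a n) * Polynomial.X ^ (2 * n) := by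
  rw [nfM, Finsupp.sum, map_sum]
  refine Finset.sum_congr rfl fun n _ => ?_
  simp only [phi, map_mul, map_pow, map_one, aeval_X, aeval_C, Matrix.cons_val_two,
    Matrix.tail_cons, Matrix.head_cons, Polynomial.algebraMap_eq]
  rw [← pow_mul]
  ring

lemma phi_nfM_X0 (b : ℕ →₀ R) :
    phi f1 f2 (nfM (X 0) b)
      = ∑ n ∈ b.support, Polynomial.C (b n * f1) * Polynomial.X ^ (2 * n + 1) := by
  rw [nfM, Finsupp.sum, map_sum]
  refine Finset.sum_congr rfl fun n _ => ?_
  simp only [phi, map_mul, map_pow, aeval_X, aeval_C, Matrix.cons_val_two,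
    Matrix.tail_cons, Matrix.head_cons, Matrix.cons_val_zero, Polynomial.algebraMap_eq]
  rw [← pow_mul]
  ring

lemma phi_nfM_X1 (c : ℕ →₀ R) :
    phi f1 f2 (nfM (X 1) c)
      = ∑ n ∈ c.support, Polynomial.C (c n * f2) * Polynomial.X ^ (2 * n + 1) := by
  rw [nfM, Finsupp.sum, map_sum]
  refine Finset.sum_congr rfl fun n _ => ?_
  simp only [phi, map_mul, map_pow, aeval_X, aeval_C, Matrix.cons_val_two,
    Matrix.tail_cons, Matrix.head_cons, Matrix.cons_val_one, Matrix.head_cons,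
    Polynomial.algebraMap_eq, Matrix.cons_val_zero]
  rw [← pow_mul]
  ring

lemma claimB
    (hsyz : ∀ b c : R, f1 * b + f2 * c = 0 → ∃ s, b = f2 * s ∧ c = -(f1 * s))
    (a b c : ℕ →₀ R)
    (h : phi f1 f2 (nfM 1 a + nfM (X 0) b + nfM (X 1) c) = 0) :
    nfM 1 a + nfM (X 0) b + nfM (X 1) c ∈ Jid f1 f2 := by
  rw [map_add, map_add, phi_nfM_one, phi_nfM_X0, phi_nfM_X1] at h
  have heven : ∀ m : ℕ, a m = 0 := by
    intro m
    have := congrArg (fun q => Polynomial.coeff q (2 * m)) h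
    simp only [Polynomial.coeff_add, Polynomial.coeff_zero, coeff_even, coeff_odd_at_even] at this
    rcases Finset.decidableMem m a.support |>.em with hm | hm
    · simpa [hm] using this
    · exact Finsupp.notMem_support_iff.mp hm
  have hodd : ∀ m : ℕ, f1 * b m + f2 * c m = 0 := by
    intro m
    have := congrArg (fun q => Polynomial.coeff q (2 * m + 1)) h
    simp only [Polynomial.coeff_add, Polynomial.coeff_zero, coeff_odd, coeff_even_at_odd] at this
    have hb : (if m ∈ b.support then b m * f1 else 0) = b m * f1 := by
      split
      · rfl
      · rw [Finsupp.notMem_support_iff.mp (by assumption), zero_mul]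
    have hc : (if m ∈ c.support then c m * f2 else 0) = c m * f2 := by
      split
      · rfl
      · rw [Finsupp.notMem_support_iff.mp (by assumption), zero_mul]
    rw [hb, hc] at this
    linear_combination this
  have ha : a = 0 := Finsupp.ext heven
  rw [ha, nfM_zero, zero_add]
  have hbu : nfM (X 0) b = ∑ n ∈ b.support ∪ c.support, C (b n) * X 2 ^ n * X 0 := by
    rw [nfM, Finsupp.sum]
    refine Finset.sum_subset Finset.subset_union_left fun n _ hn => ?_
    rw [Finsupp.notMem_support_iff.mp hn, map_zero, zero_mul, zero_mul]
  have hcu : nfM (X 1) c = ∑ n ∈ b.support ∪ c.support, C (c n) * X 2 ^ n * X 1 := by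
    rw [nfM, Finsupp.sum]
    refine Finset.sum_subset Finset.subset_union_right fun n _ hn => ?_
    rw [Finsupp.notMem_support_iff.mp hn, map_zero, zero_mul, zero_mul]
  rw [hbu, hcu, ← Finset.sum_add_distrib]
  refine Submodule.sum_mem _ fun n _ => ?_
  obtain ⟨s, hbs, hcs⟩ := hsyz (b n) (c n) (hodd n)
  rw [hbs, hcs]
  have hterm : (C (f2 * s) * X 2 ^ n * X 0 + C (-(f1 * s)) * X 2 ^ n * X 1
      : MvPolynomial (Fin 3) R)
      = (-(C s * X 2 ^ n)) * (C f1 * X 1 - C f2 * X 0) := by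
    simp only [map_mul, map_neg]
    ring
  rw [hterm]
  exact Ideal.mul_mem_left _ _ (g1_mem f1 f2)

lemma span_le_ker : Jid f1 f2 ≤ RingHom.ker (phi f1 f2 : MvPolynomial (Fin 3) R →+* Polynomial R) := by
  rw [Jid, Ideal.span_le]
  intro g hg
  simp only [gens, Set.mem_insert_iff, Set.mem_singleton_iff] at hg
  have hx0 : phi f1 f2 (X 0) = Polynomial.C f1 * Polynomial.X := by
    simp [phi, aeval_X]
  have hx1 : phi f1 f2 (X 1) = Polynomial.C f2 * Polynomial.X := by
    simp [phi, aeval_X]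
  have hx2 : phi f1 f2 (X 2) = Polynomial.X ^ 2 := by
    simp [phi, aeval_X]
  have hcc : ∀ r : R, phi f1 f2 (C r) = Polynomial.C r := by
    intro r; simp [phi, aeval_C, Polynomial.algebraMap_eq]
  rcases hg with rfl | rfl | rfl | rfl <;>
    simp only [SetLike.mem_coe, RingHom.mem_ker, RingHom.coe_coe, map_sub, map_mul, map_pow,
      hx0, hx1, hx2, hcc] <;> ring

lemma prime_X0 (k : Type*) [Field k] : Prime (X 0 : MvPolynomial (Fin 2) k) := by
  rw [← MulEquiv.prime_iff (finSuccEquiv k 1).toMulEquiv]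
  have : ((finSuccEquiv k 1).toMulEquiv (X 0 : MvPolynomial (Fin 2) k)) = Polynomial.X := by
    show (finSuccEquiv k 1) (X 0) = Polynomial.X
    exact finSuccEquiv_X_zero
  rw [this]
  exact Polynomial.prime_X

lemma syz (k : Type*) [Field k] (b c : MvPolynomial (Fin 2) k)
    (h : X 0 * b + X 1 * c = 0) :
    ∃ s, b = X 1 * s ∧ c = -(X 0 * s) := by
  have hprime := prime_X0 k
  have hdvd : (X 0 : MvPolynomial (Fin 2) k) ∣ X 1 * c := ⟨-b, by linear_combination h⟩
  have hnd : ¬ (X 0 : MvPolynomial (Fin 2) k) ∣ X 1 := by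
    rintro ⟨q, hq⟩
    have := congrArg (aeval (![0, 1] : Fin 2 → k)) hq
    simp at this
  obtain ⟨s₀, hs₀⟩ := (hprime.dvd_or_dvd hdvd).resolve_left hnd
  refine ⟨-s₀, ?_, by rw [hs₀]; ring⟩
  have hx : (X 0 : MvPolynomial (Fin 2) k) ≠ 0 := hprime.ne_zero
  apply mul_left_cancel₀ hx
  linear_combination h - X 1 * hs₀

end

end ReesLikeAux

open MvPolynomial in
/-- **Example (Jacht2CI, presentation).** Let `S = k[x₁,x₂]` with `char k ≠ 2` and
`I = (x₁,x₂)`.  The kernel of the map `T = S[y₁,y₂,z] → S[t]`, `yᵢ ↦ xᵢ t`, `z ↦ t²`,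
is generated by `x₁y₂ - x₂y₁`, `y₁² - z x₁²`, `y₁y₂ - z x₁x₂` and `y₂² - z x₂²`. -/
theorem reesLikePrime_of_maximal_ideal_two_vars
    (k : Type*) [Field k] (hchar : (2 : k) ≠ 0) :
    RingHom.ker ((MvPolynomial.aeval (fun v : Fin 3 =>
        (![Polynomial.C (MvPolynomial.X 0) * Polynomial.X,
           Polynomial.C (MvPolynomial.X 1) * Polynomial.X,
           Polynomial.X ^ 2] : Fin 3 → Polynomial (MvPolynomial (Fin 2) k)) v) :
      MvPolynomial (Fin 3) (MvPolynomial (Fin 2) k) →ₐ[MvPolynomial (Fin 2) k]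
        Polynomial (MvPolynomial (Fin 2) k)) :
      MvPolynomial (Fin 3) (MvPolynomial (Fin 2) k) →+*
        Polynomial (MvPolynomial (Fin 2) k)) =
    Ideal.span
      ({MvPolynomial.C (MvPolynomial.X 0) * MvPolynomial.X 1 -
          MvPolynomial.C (MvPolynomial.X 1) * MvPolynomial.X 0,
        MvPolynomial.X 0 ^ 2 - MvPolynomial.X 2 * MvPolynomial.C (MvPolynomial.X 0) ^ 2,
        MvPolynomial.X 0 * MvPolynomial.X 1 -
          MvPolynomial.X 2 * MvPolynomial.C (MvPolynomial.X 0 * MvPolynomial.X 1),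
        MvPolynomial.X 1 ^ 2 - MvPolynomial.X 2 * MvPolynomial.C (MvPolynomial.X 1) ^ 2} :
        Set (MvPolynomial (Fin 3) (MvPolynomial (Fin 2) k))) := by
  have hJ : Ideal.span
      ({MvPolynomial.C (MvPolynomial.X 0) * MvPolynomial.X 1 -
          MvPolynomial.C (MvPolynomial.X 1) * MvPolynomial.X 0,
        MvPolynomial.X 0 ^ 2 - MvPolynomial.X 2 * MvPolynomial.C (MvPolynomial.X 0) ^ 2,
        MvPolynomial.X 0 * MvPolynomial.X 1 -
          MvPolynomial.X 2 * MvPolynomial.C (MvPolynomial.X 0 * MvPolynomial.X 1),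
        MvPolynomial.X 1 ^ 2 - MvPolynomial.X 2 * MvPolynomial.C (MvPolynomial.X 1) ^ 2} :
        Set (MvPolynomial (Fin 3) (MvPolynomial (Fin 2) k)))
      = ReesLikeAux.Jid (MvPolynomial.X 0) (MvPolynomial.X 1) := rfl
  rw [hJ]
  apply le_antisymm
  · intro p hp
    have hp' : ReesLikeAux.phi (X 0) (X 1) p = 0 := RingHom.mem_ker.mp hp
    obtain ⟨a, b, c, hq⟩ := ReesLikeAux.claimA (X 0 : MvPolynomial (Fin 2) k) (X 1) p
    have h0 := RingHom.mem_ker.mp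
      (ReesLikeAux.span_le_ker (X 0 : MvPolynomial (Fin 2) k) (X 1) hq)
    have hnf : ReesLikeAux.phi (X 0) (X 1)
        (ReesLikeAux.nfM 1 a + ReesLikeAux.nfM (X 0) b + ReesLikeAux.nfM (X 1) c) = 0 := by
      rw [RingHom.coe_coe, map_sub, hp', zero_sub, neg_eq_zero] at h0
      exact h0
    have hmem := ReesLikeAux.claimB (X 0 : MvPolynomial (Fin 2) k) (X 1)
      (ReesLikeAux.syz k) a b c hnf
    have hp2 : p = (p - (ReesLikeAux.nfM 1 a + ReesLikeAux.nfM (X 0) b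
        + ReesLikeAux.nfM (X 1) c))
        + (ReesLikeAux.nfM 1 a + ReesLikeAux.nfM (X 0) b + ReesLikeAux.nfM (X 1) c) := by
      ring
    rw [hp2]
    exact add_mem hq hmem
  · exact ReesLikeAux.span_le_ker (X 0 : MvPolynomial (Fin 2) k) (X 1)
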